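/- Let H be a cocommutative bialgebra over a commutative ring R, F a Drinfel'd twist on H with R-matrix ℛ := F₂₁ · F⁻¹ and ℛ⁻¹ = τ(ℛ) = Σ_k R_k ⊗ R^k, and let L be a Lie algebra in H-modules equipped with an H-invariant R-bilinear form b : L × L → R (Σ b(ρ(h₍₁₎)(v), ρ(h₍₂₎)(w)) = ε(h) · b(v, w)) which is ad-invariant: b(⁅λ, x⁆, y) + b(x, ⁅λ, y⁆) = 0 for all λ, x, y ∈ L. Then the twisted pairing ⟨v, w⟩_⋆ := Σ_k b(f̄^k(v), f̄_k(w)) is invariant under the braided adjoint action with respect to the twisted bracket [x, y]_⋆ := Σ_k ⁅f̄^k(x), f̄_k(y)⁆: for all λ, x, y ∈ L, ⟨[λ, x]_⋆, y⟩_⋆ + Σ_k ⟨R_k(x), [R^k(λ), y]_⋆⟩_⋆ = 0. -/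

import Mathlib

open scoped TensorProduct

set_option maxHeartbeats 2000000

noncomputable section

/-- `Δ ⊗ id` as an algebra homomorphism `H ⊗ H → (H ⊗ H) ⊗ H`. -/
def comulTensorId (R H : Type*) [CommRing R] [Ring H] [Bialgebra R H] :
    (H ⊗[R] H) →ₐ[R] (H ⊗[R] H) ⊗[R] H :=
  Algebra.TensorProduct.map (Bialgebra.comulAlgHom R H) (AlgHom.id R H)

/-- `id ⊗ Δ` as an algebra homomorphism `H ⊗ H → H ⊗ (H ⊗ H)`. -/
def idTensorComul (R H : Type*) [CommRing R] [Ring H] [Bialgebra R H] :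
    (H ⊗[R] H) →ₐ[R] H ⊗[R] (H ⊗[R] H) :=
  Algebra.TensorProduct.map (AlgHom.id R H) (Bialgebra.comulAlgHom R H)

/-- `F` is a Drinfel'd twist on the bialgebra `H` with two-sided inverse `Finv`:
it is invertible and satisfies the 2-cocycle condition
`(F ⊗ 1) · (Δ ⊗ id)(F) = (1 ⊗ F) · (id ⊗ Δ)(F)` in `H ⊗ H ⊗ H`. -/
def IsDrinfeldTwist (R : Type*) {H : Type*} [CommRing R] [Ring H] [Bialgebra R H]
    (F Finv : H ⊗[R] H) : Prop :=
  F * Finv = 1 ∧ Finv * F = 1 ∧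
    (TensorProduct.assoc R H H H) ((F ⊗ₜ[R] (1 : H)) * comulTensorId R H F) =
      ((1 : H) ⊗ₜ[R] F) * idTensorComul R H F

/-- The `R`-matrix `ℛ := F₂₁ · F⁻¹` associated to a Drinfel'd twist, where
`F₂₁ = τ(F)` and `τ` is the flip of `H ⊗ H`. -/
def Rmat (R : Type*) {H : Type*} [CommRing R] [Ring H] [Bialgebra R H]
    (F Finv : H ⊗[R] H) : H ⊗[R] H :=
  (Algebra.TensorProduct.comm R H H) F * Finv

/-- The bialgebra `H` is cocommutative: `τ ∘ Δ = Δ`. -/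
def IsCocommutative (R : Type*) (H : Type*) [CommRing R] [Ring H] [Bialgebra R H] : Prop :=
  ∀ x : H, (Algebra.TensorProduct.comm R H H) (Coalgebra.comul (R := R) x) =
    Coalgebra.comul (R := R) x

/-- The action of an element of `H ⊗ H` on `M ⊗ N`, acting with the first leg on `M`
and the second leg on `N` through the given representations. -/
def legAct {R H : Type*} [CommRing R] [Ring H] [Algebra R H]
    {M N : Type*} [AddCommGroup M] [Module R M] [AddCommGroup N] [Module R N]
    (ρM : H →ₐ[R] Module.End R M) (ρN : H →ₐ[R] Module.End R N) :
    H ⊗[R] H →ₗ[R] (M ⊗[R] N →ₗ[R] M ⊗[R] N) :=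
  (TensorProduct.homTensorHomMap (RingHom.id R) M N M N).comp
    (TensorProduct.map ρM.toLinearMap ρN.toLinearMap)

/-- The Lie bracket of `L` as an `R`-bilinear map. -/
def lieBil (R L : Type*) [CommRing R] [LieRing L] [LieAlgebra R L] :
    L →ₗ[R] L →ₗ[R] L :=
  LinearMap.mk₂ R (fun x y => ⁅x, y⁆) add_lie smul_lie lie_add lie_smul

/-- `ρ` makes the `R`-Lie algebra `L` into a Lie algebra in `H`-modules:
`ρ(h)⁅x, y⁆ = Σ ⁅ρ(h₍₁₎)(x), ρ(h₍₂₎)(y)⁆`. -/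
def IsHLieAlgebra (R : Type*) {H L : Type*} [CommRing R] [Ring H] [Bialgebra R H]
    [LieRing L] [LieAlgebra R L] (ρ : H →ₐ[R] Module.End R L) : Prop :=
  ∀ (h : H) (x y : L),
    ρ h ⁅x, y⁆ =
      TensorProduct.lift (lieBil R L)
        (legAct ρ ρ (Coalgebra.comul (R := R) h) (x ⊗ₜ[R] y))

/-- The twisted bracket `[x, y]_⋆ := Σ ⁅f̄ᵏ(x), f̄ₖ(y)⁆`, as a linear map on `L ⊗ L`. -/
def starBracket {R H L : Type*} [CommRing R] [Ring H] [Bialgebra R H]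
    [LieRing L] [LieAlgebra R L] (ρ : H →ₐ[R] Module.End R L) (Finv : H ⊗[R] H) :
    L ⊗[R] L →ₗ[R] L :=
  (TensorProduct.lift (lieBil R L)).comp (legAct ρ ρ Finv)

/-- The twisted pairing `⟨v, w⟩_⋆ := Σ b(f̄ᵏ(v), f̄ₖ(w))`, as a linear map on `V ⊗ V`. -/
def starPair {R H V : Type*} [CommRing R] [Ring H] [Bialgebra R H]
    [AddCommGroup V] [Module R V] (ρ : H →ₐ[R] Module.End R V)
    (b : V →ₗ[R] V →ₗ[R] R) (Finv : H ⊗[R] H) : V ⊗[R] V →ₗ[R] R :=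
  (TensorProduct.lift b).comp (legAct ρ ρ Finv)

section Aux

open TensorProduct LinearMap

variable {R : Type*} [CommRing R] {H₁ H₂ : Type*} [Ring H₁] [Algebra R H₁]
  [Ring H₂] [Algebra R H₂]
variable {M N : Type*} [AddCommGroup M] [Module R M] [AddCommGroup N] [Module R N]

/-- Two-algebra generalization of `legAct`. -/
def legAct₂ (ρM : H₁ →ₐ[R] Module.End R M) (ρN : H₂ →ₐ[R] Module.End R N) :
    H₁ ⊗[R] H₂ →ₗ[R] (M ⊗[R] N →ₗ[R] M ⊗[R] N) :=
  (TensorProduct.homTensorHomMap (RingHom.id R) M N M N).comp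
    (TensorProduct.map ρM.toLinearMap ρN.toLinearMap)

lemma legAct_eq_legAct₂ {H : Type*} [Ring H] [Algebra R H]
    (ρM : H →ₐ[R] Module.End R M) (ρN : H →ₐ[R] Module.End R N) :
    legAct ρM ρN = legAct₂ ρM ρN := rfl

lemma legAct_tmul (ρM : H₁ →ₐ[R] Module.End R M) (ρN : H₂ →ₐ[R] Module.End R N)
    (h : H₁) (k : H₂) :
    legAct₂ ρM ρN (h ⊗ₜ[R] k) = TensorProduct.map (ρM h) (ρN k) := by
  simp [legAct₂]

lemma legAct_one (ρM : H₁ →ₐ[R] Module.End R M) (ρN : H₂ →ₐ[R] Module.End R N) :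
    legAct₂ ρM ρN (1 : H₁ ⊗[R] H₂) = 1 := by
  rw [Algebra.TensorProduct.one_def, legAct_tmul, map_one, map_one]
  exact TensorProduct.map_id

lemma legAct_mul (ρM : H₁ →ₐ[R] Module.End R M) (ρN : H₂ →ₐ[R] Module.End R N)
    (a c : H₁ ⊗[R] H₂) :
    legAct₂ ρM ρN (a * c) = legAct₂ ρM ρN a ∘ₗ legAct₂ ρM ρN c := by
  induction a using TensorProduct.induction_on with
  | zero => simp
  | add a₁ a₂ h₁ h₂ => simp [add_mul, h₁, h₂, LinearMap.add_comp]
  | tmul h k =>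
    induction c using TensorProduct.induction_on with
    | zero => simp
    | add c₁ c₂ h₁ h₂ => simp [mul_add, h₁, h₂, LinearMap.comp_add]
    | tmul h' k' =>
      rw [Algebra.TensorProduct.tmul_mul_tmul, legAct_tmul, legAct_tmul, legAct_tmul,
        map_mul, map_mul]
      exact TensorProduct.map_comp _ _ _ _

/-- `legAct₂` as an algebra homomorphism. -/
def pairRep (ρM : H₁ →ₐ[R] Module.End R M) (ρN : H₂ →ₐ[R] Module.End R N) :
    H₁ ⊗[R] H₂ →ₐ[R] Module.End R (M ⊗[R] N) :=
  AlgHom.ofLinearMap (legAct₂ ρM ρN) (legAct_one ρM ρN) (legAct_mul ρM ρN)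

@[simp] lemma pairRep_apply (ρM : H₁ →ₐ[R] Module.End R M) (ρN : H₂ →ₐ[R] Module.End R N)
    (a : H₁ ⊗[R] H₂) : pairRep ρM ρN a = legAct₂ ρM ρN a := rfl

end Aux

section LieAux

open TensorProduct LinearMap

variable {R H L : Type*} [CommRing R] [Ring H] [Bialgebra R H]
  [LieRing L] [LieAlgebra R L] (ρ : H →ₐ[R] Module.End R L)

lemma hL_lift (hL : IsHLieAlgebra R ρ) (h : H) (a : L ⊗[R] L) :
    ρ h (TensorProduct.lift (lieBil R L) a)
      = TensorProduct.lift (lieBil R L) (legAct₂ ρ ρ (Coalgebra.comul (R := R) h) a) := by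
  induction a using TensorProduct.induction_on with
  | zero => simp
  | add a₁ a₂ h₁ h₂ => simp [h₁, h₂]
  | tmul u v => simpa [lieBil, legAct_eq_legAct₂] using hL h u v

/-- Equivariance of the bracket, first-leg version. -/
lemma equiv_rT (hL : IsHLieAlgebra R ρ) (G : H ⊗[R] H) (t : (L ⊗[R] L) ⊗[R] L) :
    legAct₂ ρ ρ G (rTensor L (TensorProduct.lift (lieBil R L)) t)
      = rTensor L (TensorProduct.lift (lieBil R L))
          (legAct₂ (pairRep ρ ρ) ρ (comulTensorId R H G) t) := by
  induction G using TensorProduct.induction_on with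
  | zero => simp
  | add G₁ G₂ h₁ h₂ => simp only [map_add, LinearMap.add_apply, h₁, h₂]
  | tmul h k =>
    induction t using TensorProduct.induction_on with
    | zero => simp
    | add t₁ t₂ h₁ h₂ => simp only [map_add, h₁, h₂]
    | tmul a w =>
      rw [rTensor_tmul, legAct_tmul, TensorProduct.map_tmul, comulTensorId,
        Algebra.TensorProduct.map_tmul, legAct_tmul, TensorProduct.map_tmul,
        rTensor_tmul, AlgHom.coe_id, id_eq, pairRep_apply,
        Bialgebra.comulAlgHom_apply, hL_lift ρ hL]

/-- Equivariance of the bracket, second-leg version. -/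
lemma equiv_lT (hL : IsHLieAlgebra R ρ) (G : H ⊗[R] H) (t : L ⊗[R] (L ⊗[R] L)) :
    legAct₂ ρ ρ G (lTensor L (TensorProduct.lift (lieBil R L)) t)
      = lTensor L (TensorProduct.lift (lieBil R L))
          (legAct₂ ρ (pairRep ρ ρ) (idTensorComul R H G) t) := by
  induction G using TensorProduct.induction_on with
  | zero => simp
  | add G₁ G₂ h₁ h₂ => simp only [map_add, LinearMap.add_apply, h₁, h₂]
  | tmul h k =>
    induction t using TensorProduct.induction_on with
    | zero => simp
    | add t₁ t₂ h₁ h₂ => simp only [map_add, h₁, h₂]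
    | tmul w a =>
      rw [lTensor_tmul, legAct_tmul, TensorProduct.map_tmul, idTensorComul,
        Algebra.TensorProduct.map_tmul, legAct_tmul, TensorProduct.map_tmul,
        lTensor_tmul, AlgHom.coe_id, id_eq, pairRep_apply,
        Bialgebra.comulAlgHom_apply, hL_lift ρ hL]

/-- Compatibility of `legAct` with the associator. -/
lemma legAct_assoc (G : (H ⊗[R] H) ⊗[R] H) (t : (L ⊗[R] L) ⊗[R] L) :
    legAct₂ ρ (pairRep ρ ρ) ((Algebra.TensorProduct.assoc R R R H H H) G)
        ((TensorProduct.assoc R L L L) t)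
      = (TensorProduct.assoc R L L L) (legAct₂ (pairRep ρ ρ) ρ G t) := by
  induction G using TensorProduct.induction_on with
  | zero => simp
  | add G₁ G₂ h₁ h₂ => simp only [map_add, LinearMap.add_apply, h₁, h₂]
  | tmul a h =>
    induction a using TensorProduct.induction_on with
    | zero => simp [TensorProduct.zero_tmul]
    | add a₁ a₂ h₁ h₂ => simp only [TensorProduct.add_tmul, map_add, h₁, h₂, LinearMap.add_apply]
    | tmul h' k' =>
      induction t using TensorProduct.induction_on with
      | zero => simp
      | add t₁ t₂ h₁ h₂ => simp only [map_add, h₁, h₂]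
      | tmul c w =>
        induction c using TensorProduct.induction_on with
        | zero => simp [TensorProduct.zero_tmul]
        | add c₁ c₂ h₁ h₂ => simp only [TensorProduct.add_tmul, map_add, h₁, h₂]
        | tmul u v =>
          simp [Algebra.TensorProduct.assoc_tmul, legAct_tmul, TensorProduct.assoc_tmul]

/-- Compatibility of `legAct` with swapping the first two legs. -/
lemma legAct_swap (G : (H ⊗[R] H) ⊗[R] H) (t : (L ⊗[R] L) ⊗[R] L) :
    legAct₂ (pairRep ρ ρ) ρ
        ((Algebra.TensorProduct.map (Algebra.TensorProduct.comm R H H).toAlgHom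
            (AlgHom.id R H)) G)
        (rTensor L (TensorProduct.comm R L L).toLinearMap t)
      = rTensor L (TensorProduct.comm R L L).toLinearMap
          (legAct₂ (pairRep ρ ρ) ρ G t) := by
  induction G using TensorProduct.induction_on with
  | zero => simp
  | add G₁ G₂ h₁ h₂ => simp only [map_add, LinearMap.add_apply, h₁, h₂]
  | tmul a h =>
    induction a using TensorProduct.induction_on with
    | zero => simp [TensorProduct.zero_tmul]
    | add a₁ a₂ h₁ h₂ => simp only [TensorProduct.add_tmul, map_add, h₁, h₂, LinearMap.add_apply]
    | tmul h' k' =>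
      induction t using TensorProduct.induction_on with
      | zero => simp
      | add t₁ t₂ h₁ h₂ => simp only [map_add, h₁, h₂]
      | tmul c w =>
        induction c using TensorProduct.induction_on with
        | zero => simp [TensorProduct.zero_tmul]
        | add c₁ c₂ h₁ h₂ => simp only [TensorProduct.add_tmul, map_add, h₁, h₂]
        | tmul u v =>
          simp [Algebra.TensorProduct.map_tmul, legAct_tmul]

/-- Ad-invariance of `b`, in tensor form. -/
lemma hbad_lift (b : L →ₗ[R] L →ₗ[R] R)
    (hbad : ∀ l x y : L, b ⁅l, x⁆ y + b x ⁅l, y⁆ = 0) (t : (L ⊗[R] L) ⊗[R] L) :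
    TensorProduct.lift b (rTensor L (TensorProduct.lift (lieBil R L)) t)
      + TensorProduct.lift b (lTensor L (TensorProduct.lift (lieBil R L))
          ((TensorProduct.assoc R L L L)
            (rTensor L (TensorProduct.comm R L L).toLinearMap t))) = 0 := by
  induction t using TensorProduct.induction_on with
  | zero => simp
  | add t₁ t₂ h₁ h₂ =>
    simp only [map_add]
    linear_combination h₁ + h₂
  | tmul c w =>
    induction c using TensorProduct.induction_on with
    | zero => simp [TensorProduct.zero_tmul]
    | add c₁ c₂ h₁ h₂ =>
      simp only [TensorProduct.add_tmul, map_add]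
      linear_combination h₁ + h₂
    | tmul u v =>
      simpa [lieBil] using hbad u v w

end LieAux

/-- For a Drinfel'd twist on a cocommutative bialgebra `H` and a Lie
algebra `L` in `H`-modules with an `H`-invariant, ad-invariant bilinear form `b`, the
twisted pairing is invariant under the braided adjoint action:
`⟨[λ, x]_⋆, y⟩_⋆ + Σ_k ⟨R_k(x), [R^k(λ), y]_⋆⟩_⋆ = 0`,
where `ℛ⁻¹ = τ(ℛ) = Σ_k R_k ⊗ R^k`. -/
theorem starPair_braided_ad_invariant
    (R : Type*) [CommRing R] (H : Type*) [Ring H] [Bialgebra R H]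
    (hcc : IsCocommutative R H)
    (L : Type*) [LieRing L] [LieAlgebra R L]
    (ρ : H →ₐ[R] Module.End R L) (hL : IsHLieAlgebra R ρ)
    (b : L →ₗ[R] L →ₗ[R] R)
    (hbinv : ∀ (h : H) (v w : L),
      TensorProduct.lift b (legAct ρ ρ (Coalgebra.comul (R := R) h) (v ⊗ₜ[R] w)) =
        Coalgebra.counit (R := R) h * b v w)
    (hbad : ∀ l x y : L, b ⁅l, x⁆ y + b x ⁅l, y⁆ = 0)
    (F Finv : H ⊗[R] H) (hF : IsDrinfeldTwist R F Finv) :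
    ∀ l x y : L,
      starPair ρ b Finv ((starBracket ρ Finv (l ⊗ₜ[R] x)) ⊗ₜ[R] y) +
          ((starPair ρ b Finv).comp
              (TensorProduct.map LinearMap.id (starBracket ρ Finv)))
            ((TensorProduct.assoc R L L L)
              ((legAct ρ ρ ((Algebra.TensorProduct.comm R H H) (Rmat R F Finv))
                  (x ⊗ₜ[R] l)) ⊗ₜ[R] y)) = 0 := by
  intro l x y
  simp only [legAct_eq_legAct₂]
  obtain ⟨h1, h2, h3⟩ := hF
  set C : (H ⊗[R] H) ⊗[R] H :=
    comulTensorId R H Finv * (Finv ⊗ₜ[R] (1 : H)) with hC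
  set A : (H ⊗[R] H) ⊗[R] H :=
    (F ⊗ₜ[R] (1 : H)) * comulTensorId R H F with hA
  set D : H ⊗[R] (H ⊗[R] H) :=
    idTensorComul R H Finv * ((1 : H) ⊗ₜ[R] Finv) with hD
  set B : H ⊗[R] (H ⊗[R] H) :=
    ((1 : H) ⊗ₜ[R] F) * idTensorComul R H F with hB
  have hCA : C * A = 1 := by
    rw [hC, hA]
    calc comulTensorId R H Finv * (Finv ⊗ₜ[R] (1 : H)) *
          ((F ⊗ₜ[R] (1 : H)) * comulTensorId R H F)
        = comulTensorId R H Finv *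
            ((Finv ⊗ₜ[R] (1 : H)) * (F ⊗ₜ[R] (1 : H))) * comulTensorId R H F := by
          simp only [mul_assoc]
      _ = comulTensorId R H Finv * comulTensorId R H F := by
          rw [Algebra.TensorProduct.tmul_mul_tmul, h2, one_mul,
            ← Algebra.TensorProduct.one_def, mul_one]
      _ = 1 := by rw [← map_mul, h2, map_one]
  have hAC : A * C = 1 := by
    rw [hC, hA]
    calc (F ⊗ₜ[R] (1 : H)) * comulTensorId R H F *
          (comulTensorId R H Finv * (Finv ⊗ₜ[R] (1 : H)))
        = (F ⊗ₜ[R] (1 : H)) *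
            (comulTensorId R H F * comulTensorId R H Finv) * (Finv ⊗ₜ[R] (1 : H)) := by
          simp only [mul_assoc]
      _ = (F ⊗ₜ[R] (1 : H)) * (Finv ⊗ₜ[R] (1 : H)) := by
          rw [← map_mul, h1, map_one, mul_one]
      _ = 1 := by
          rw [Algebra.TensorProduct.tmul_mul_tmul, h1, one_mul,
            ← Algebra.TensorProduct.one_def]
  have hDB : D * B = 1 := by
    rw [hD, hB]
    calc idTensorComul R H Finv * ((1 : H) ⊗ₜ[R] Finv) *
          (((1 : H) ⊗ₜ[R] F) * idTensorComul R H F)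
        = idTensorComul R H Finv *
            (((1 : H) ⊗ₜ[R] Finv) * ((1 : H) ⊗ₜ[R] F)) * idTensorComul R H F := by
          simp only [mul_assoc]
      _ = idTensorComul R H Finv * idTensorComul R H F := by
          rw [Algebra.TensorProduct.tmul_mul_tmul, h2, one_mul,
            ← Algebra.TensorProduct.one_def, mul_one]
      _ = 1 := by rw [← map_mul, h2, map_one]
  have hassoc3 : (Algebra.TensorProduct.assoc R R R H H H) A = B := h3
  have hassocC : (Algebra.TensorProduct.assoc R R R H H H) C = D := by
    have hBC : B * (Algebra.TensorProduct.assoc R R R H H H) C = 1 := by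
      rw [← hassoc3, ← map_mul, hAC, map_one]
    calc (Algebra.TensorProduct.assoc R R R H H H) C
        = (D * B) * (Algebra.TensorProduct.assoc R R R H H H) C := by rw [hDB, one_mul]
      _ = D * (B * (Algebra.TensorProduct.assoc R R R H H H) C) := by rw [mul_assoc]
      _ = D := by rw [hBC, mul_one]
  -- cocommutativity: swapping the first two legs fixes `(Δ ⊗ id)(G)`
  have hccG : ∀ G : H ⊗[R] H,
      (Algebra.TensorProduct.map (Algebra.TensorProduct.comm R H H).toAlgHom
        (AlgHom.id R H)) (comulTensorId R H G) = comulTensorId R H G := by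
    intro G
    induction G using TensorProduct.induction_on with
    | zero => simp
    | add G₁ G₂ hG₁ hG₂ => simp only [map_add, hG₁, hG₂]
    | tmul h k =>
      rw [comulTensorId, Algebra.TensorProduct.map_tmul,
        Algebra.TensorProduct.map_tmul, Bialgebra.comulAlgHom_apply]
      simp [hcc h]
  have hcommcomm : ∀ z : H ⊗[R] H,
      (Algebra.TensorProduct.comm R H H) ((Algebra.TensorProduct.comm R H H) z) = z := by
    intro z
    induction z using TensorProduct.induction_on with
    | zero => simp
    | add z₁ z₂ hz₁ hz₂ => simp [hz₁, hz₂]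
    | tmul h k => simp
  -- the key identity: `τ₁₂(C) = C · (τ(ℛ) ⊗ 1)`
  have hR : (Algebra.TensorProduct.comm R H H) (Rmat R F Finv) =
      F * (Algebra.TensorProduct.comm R H H) Finv := by
    rw [Rmat, map_mul, hcommcomm]
  have hkey : (Algebra.TensorProduct.map (Algebra.TensorProduct.comm R H H).toAlgHom
        (AlgHom.id R H)) C =
      C * (((Algebra.TensorProduct.comm R H H) (Rmat R F Finv)) ⊗ₜ[R] (1 : H)) := by
    have e1 : (Algebra.TensorProduct.map (Algebra.TensorProduct.comm R H H).toAlgHom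
          (AlgHom.id R H)) C =
        comulTensorId R H Finv *
          (((Algebra.TensorProduct.comm R H H) Finv) ⊗ₜ[R] (1 : H)) := by
      rw [hC, map_mul, hccG, Algebra.TensorProduct.map_tmul]
      simp
    have e2 : C * (((Algebra.TensorProduct.comm R H H) (Rmat R F Finv)) ⊗ₜ[R] (1 : H)) =
        comulTensorId R H Finv *
          (((Algebra.TensorProduct.comm R H H) Finv) ⊗ₜ[R] (1 : H)) := by
      rw [hC, hR, mul_assoc, Algebra.TensorProduct.tmul_mul_tmul,
        ← mul_assoc Finv F, h2, one_mul, one_mul]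
    rw [e1, e2]
  -- the triple action element
  set z1 : (L ⊗[R] L) ⊗[R] L := (l ⊗ₜ[R] x) ⊗ₜ[R] y with hz1
  set s : (L ⊗[R] L) ⊗[R] L := legAct₂ (pairRep ρ ρ) ρ C z1 with hs
  -- first term
  have hT1 : starPair ρ b Finv ((starBracket ρ Finv (l ⊗ₜ[R] x)) ⊗ₜ[R] y) =
      TensorProduct.lift b
        (LinearMap.rTensor L (TensorProduct.lift (lieBil R L)) s) := by
    have e1 : (starBracket ρ Finv (l ⊗ₜ[R] x)) ⊗ₜ[R] y =
        LinearMap.rTensor L (TensorProduct.lift (lieBil R L))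
          (legAct₂ (pairRep ρ ρ) ρ (Finv ⊗ₜ[R] (1 : H)) z1) := by
      rw [legAct_tmul, hz1, TensorProduct.map_tmul, LinearMap.rTensor_tmul,
        map_one, starBracket]
      rfl
    rw [starPair, LinearMap.comp_apply, e1, legAct_eq_legAct₂, equiv_rT ρ hL,
      ← LinearMap.comp_apply (legAct₂ (pairRep ρ ρ) ρ _), ← legAct_mul, hs, hC]
  -- second term
  have hT2 :
      ((starPair ρ b Finv).comp
          (TensorProduct.map LinearMap.id (starBracket ρ Finv)))
        ((TensorProduct.assoc R L L L)
          ((legAct₂ ρ ρ ((Algebra.TensorProduct.comm R H H) (Rmat R F Finv))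
              (x ⊗ₜ[R] l)) ⊗ₜ[R] y)) =
      TensorProduct.lift b (LinearMap.lTensor L (TensorProduct.lift (lieBil R L))
        ((TensorProduct.assoc R L L L)
          (LinearMap.rTensor L (TensorProduct.comm R L L).toLinearMap s))) := by
    set G₀ : H ⊗[R] H := (Algebra.TensorProduct.comm R H H) (Rmat R F Finv) with hG₀
    have e1 : (legAct₂ ρ ρ G₀ (x ⊗ₜ[R] l)) ⊗ₜ[R] y =
        legAct₂ (pairRep ρ ρ) ρ (G₀ ⊗ₜ[R] (1 : H)) ((x ⊗ₜ[R] l) ⊗ₜ[R] y) := by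
      rw [legAct_tmul, TensorProduct.map_tmul, map_one]
      rfl
    have e2 : TensorProduct.map (LinearMap.id (M := L)) (starBracket ρ Finv) =
        (LinearMap.lTensor L (TensorProduct.lift (lieBil R L))) ∘ₗ
          (legAct₂ ρ (pairRep ρ ρ) ((1 : H) ⊗ₜ[R] Finv)) := by
      rw [legAct_tmul, map_one, starBracket]
      ext u v
      simp [LinearMap.lTensor, legAct_eq_legAct₂]
    have e3 : (x ⊗ₜ[R] l) ⊗ₜ[R] y =
        LinearMap.rTensor L (TensorProduct.comm R L L).toLinearMap z1 := by
      rw [hz1, LinearMap.rTensor_tmul]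
      rfl
    rw [LinearMap.comp_apply, e1, e2,
      ← legAct_assoc ρ (G₀ ⊗ₜ[R] (1 : H)) ((x ⊗ₜ[R] l) ⊗ₜ[R] y), LinearMap.comp_apply,
      ← LinearMap.comp_apply (legAct₂ ρ (pairRep ρ ρ) _), ← legAct_mul,
      starPair, LinearMap.comp_apply, legAct_eq_legAct₂, equiv_lT ρ hL,
      ← LinearMap.comp_apply (legAct₂ ρ (pairRep ρ ρ) _), ← legAct_mul]
    have e4 : idTensorComul R H Finv *
          (((1 : H) ⊗ₜ[R] Finv) *
            (Algebra.TensorProduct.assoc R R R H H H) (G₀ ⊗ₜ[R] (1 : H))) =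
        (Algebra.TensorProduct.assoc R R R H H H)
          ((Algebra.TensorProduct.map (Algebra.TensorProduct.comm R H H).toAlgHom
            (AlgHom.id R H)) C) := by
      rw [← mul_assoc, ← hD, ← hassocC, ← map_mul, hkey, hG₀]
    rw [e4, e3, legAct_assoc, legAct_swap, ← hs]
  rw [hT1, hT2]
  exact hbad_lift b hbad s
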